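/- Let G be a simple graph on a vertex set V in which every vertex has positive degree, and in which every vertex degree is at most Λ for a fixed real Λ ≥ 1; let 𝓛 be the normalized Laplacian. Suppose S ⊆ V (finite or infinite) is such that for every v ∈ S there exists a vertex u_v ∉ S adjacent to v whose set of neighbors intersects S exactly in {v}. Then S is a Λ-set: for every φ : V → ℂ supported in S with ∑_{v∈V}|φ(v)|² and ∑_{v∈V}|(𝓛φ)(v)|² finite, one has (∑_{v∈V}|φ(v)|²)^{1/2} ≤ Λ·(∑_{v∈V}|(𝓛φ)(v)|²)^{1/2}. -/
import Mathlib


/-- The normalized Laplacian of a locally finite simple graph, acting on `f : V → ℂ`: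
`(𝓛 f) v = f v − ∑_{u ∼ v} f u / √(d u · d v)`. -/
noncomputable def nLap {V : Type*} (G : SimpleGraph V) [G.LocallyFinite] (f : V → ℂ) (v : V) : ℂ :=
  f v - ∑ u ∈ G.neighborFinset v, f u / (Real.sqrt ((G.degree u : ℝ) * (G.degree v : ℝ)) : ℂ)

/-- If every vertex degree is at most `Λ` (with `Λ ≥ 1`) and every `v ∈ S` has a
neighbor `u_v ∉ S` whose set of neighbors meets `S` exactly in `{v}`, then `S` is a `Λ`-set. -/
theorem lambda_set_of_private_neighbors {V : Type*} (G : SimpleGraph V) [G.LocallyFinite]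
    (hdeg : ∀ v : V, 0 < G.degree v)
    (Λ : ℝ) (hΛ : 1 ≤ Λ) (hdegΛ : ∀ v : V, (G.degree v : ℝ) ≤ Λ)
    (S : Set V)
    (hS : ∀ v ∈ S, ∃ u : V, u ∉ S ∧ G.Adj v u ∧ ∀ w : V, G.Adj u w → w ∈ S → w = v)
    (φ : V → ℂ) (hsupp : ∀ v, v ∉ S → φ v = 0)
    (hsum1 : Summable fun v => ‖φ v‖ ^ 2)
    (hsum2 : Summable fun v => ‖nLap G φ v‖ ^ 2) :
    Real.sqrt (∑' v, ‖φ v‖ ^ 2) ≤ Λ * Real.sqrt (∑' v, ‖nLap G φ v‖ ^ 2) := by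
  classical
  have hΛ0 : (0:ℝ) ≤ Λ := le_trans zero_le_one hΛ
  -- choice of private neighbors
  choose u huS huAdj hupriv using hS
  set U : S → V := fun v => u v.1 v.2 with hU
  -- injectivity of U
  have hUinj : Function.Injective U := by
    intro v₁ v₂ h
    have h2 : G.Adj (U v₁) v₂ := by rw [h]; exact (huAdj v₂.1 v₂.2).symm
    exact Subtype.ext ((hupriv v₁.1 v₁.2 v₂.1 h2 v₂.2).symm ▸ rfl)
  -- key pointwise bound
  have hkey : ∀ v : S, ‖φ v.1‖ ^ 2 ≤ Λ ^ 2 * ‖nLap G φ (U v)‖ ^ 2 := by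
    intro ⟨v, hv⟩
    set w := u v hv with hw
    have hAdj : G.Adj v w := huAdj v hv
    have hsq : (0:ℝ) < Real.sqrt ((G.degree v : ℝ) * (G.degree w : ℝ)) := by
      exact Real.sqrt_pos.2 (mul_pos (by exact_mod_cast hdeg v) (by exact_mod_cast hdeg w))
    have hnl : nLap G φ w = - (φ v / (Real.sqrt ((G.degree v : ℝ) * (G.degree w : ℝ)) : ℂ)) := by
      unfold nLap
      rw [hsupp w (huS v hv)]
      rw [Finset.sum_eq_single v]
      · ring
      · intro b hb hbv
        have : φ b = 0 := by
          by_cases hbS : b ∈ S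
          · exact absurd (hupriv v hv b (by rwa [SimpleGraph.mem_neighborFinset] at hb) hbS) hbv
          · exact hsupp b hbS
        simp [this]
      · intro hvmem
        exact absurd ((SimpleGraph.mem_neighborFinset _ _ _).2 hAdj.symm) hvmem
    have hnorm : ‖nLap G φ w‖ = ‖φ v‖ / Real.sqrt ((G.degree v : ℝ) * (G.degree w : ℝ)) := by
      rw [hnl, norm_neg, norm_div, Complex.norm_real, Real.norm_eq_abs,
        abs_of_pos hsq]
    have hle : Real.sqrt ((G.degree v : ℝ) * (G.degree w : ℝ)) ≤ Λ := by
      have : (G.degree v : ℝ) * (G.degree w : ℝ) ≤ Λ * Λ :=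
        mul_le_mul (hdegΛ v) (hdegΛ w) (by positivity) hΛ0
      calc Real.sqrt ((G.degree v : ℝ) * (G.degree w : ℝ)) ≤ Real.sqrt (Λ * Λ) :=
            Real.sqrt_le_sqrt this
        _ = Λ := Real.sqrt_mul_self hΛ0
    have : ‖φ v‖ ≤ Λ * ‖nLap G φ w‖ := by
      rw [hnorm]
      have h0 : 0 ≤ ‖φ v‖ / Real.sqrt ((G.degree v : ℝ) * (G.degree w : ℝ)) :=
        div_nonneg (norm_nonneg _) hsq.le
      calc ‖φ v‖ = Real.sqrt ((G.degree v : ℝ) * (G.degree w : ℝ)) *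
            (‖φ v‖ / Real.sqrt ((G.degree v : ℝ) * (G.degree w : ℝ))) := by
            rw [mul_comm, div_mul_cancel₀ _ (ne_of_gt hsq)]
        _ ≤ Λ * (‖φ v‖ / Real.sqrt ((G.degree v : ℝ) * (G.degree w : ℝ))) :=
            mul_le_mul_of_nonneg_right hle h0
    calc ‖φ v‖ ^ 2 ≤ (Λ * ‖nLap G φ w‖) ^ 2 := by
          apply sq_le_sq' _ this
          nlinarith [norm_nonneg (φ v)]
      _ = Λ ^ 2 * ‖nLap G φ w‖ ^ 2 := by ring
  -- sum comparison
  have hsum1' : Summable fun v : S => ‖φ v.1‖ ^ 2 := hsum1.subtype S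
  have hsum2' : Summable fun w : V => Λ ^ 2 * ‖nLap G φ w‖ ^ 2 := hsum2.mul_left _
  have hsupport : Function.support (fun v => ‖φ v‖ ^ 2) ⊆ S := by
    intro v hv
    by_contra hvS
    exact hv (by simp [hsupp v hvS])
  have h1 : (∑' v, ‖φ v‖ ^ 2) = ∑' v : S, ‖φ v.1‖ ^ 2 :=
    (tsum_subtype_eq_of_support_subset hsupport).symm
  have h2 : (∑' v : S, ‖φ v.1‖ ^ 2) ≤ ∑' w, Λ ^ 2 * ‖nLap G φ w‖ ^ 2 := by
    apply Summable.tsum_le_tsum_of_inj U hUinj (fun c _ => by positivity) hkey hsum1' hsum2'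
  have h3 : (∑' w, Λ ^ 2 * ‖nLap G φ w‖ ^ 2) = Λ ^ 2 * ∑' w, ‖nLap G φ w‖ ^ 2 := tsum_mul_left
  have hfinal : (∑' v, ‖φ v‖ ^ 2) ≤ Λ ^ 2 * ∑' w, ‖nLap G φ w‖ ^ 2 := by
    rw [h1]; rw [h3] at h2; exact h2
  calc Real.sqrt (∑' v, ‖φ v‖ ^ 2) ≤ Real.sqrt (Λ ^ 2 * ∑' w, ‖nLap G φ w‖ ^ 2) :=
        Real.sqrt_le_sqrt hfinal
    _ = Λ * Real.sqrt (∑' w, ‖nLap G φ w‖ ^ 2) := by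
        rw [Real.sqrt_mul (by positivity), Real.sqrt_sq hΛ0]
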